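/- Let r ≥ 3 and let L ⊂ {0,1,...,r-1}. If H is an L-intersecting r-uniform hypergraph on n vertices (every two distinct edges intersect in a number of vertices belonging to L) and n ≥ 2^r · r^3, then |H| ≤ ∏_{ℓ∈L} (n-ℓ)/(r-ℓ). -/

import Mathlib

open Finset

namespace DEFaux

lemma f_succ (r : ℕ) : 2 ^ r * r ^ 3 + 1 ≤ 2 ^ (r + 1) * (r + 1) ^ 3 := by
  have h1 : (1:ℕ) ≤ 2 ^ r := Nat.one_le_two_pow
  have h2 : r ^ 3 + 1 ≤ (r + 1) ^ 3 := by
    have e : (r+1)^3 = r^3 + 3*r^2 + 3*r + 1 := by ring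
    omega
  calc 2 ^ r * r ^ 3 + 1 ≤ 2 ^ r * r ^ 3 + 2 ^ r := by omega
    _ = 2 ^ r * (r ^ 3 + 1) := by ring
    _ ≤ 2 ^ r * (r + 1) ^ 3 := Nat.mul_le_mul_left _ h2
    _ ≤ 2 ^ (r + 1) * (r + 1) ^ 3 := by
        apply Nat.mul_le_mul_right
        apply Nat.pow_le_pow_right <;> omega

lemma f_gap {a b : ℕ} (h : a ≤ b) : 2 ^ a * a ^ 3 + (b - a) ≤ 2 ^ b * b ^ 3 := by
  induction b with
  | zero => simp at h; subst h; simp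
  | succ b ih =>
    rcases Nat.eq_or_lt_of_le h with rfl | hlt
    · simp
    · have hab : a ≤ b := by omega
      have := ih hab
      have := f_succ b
      omega

lemma r_le_f (r : ℕ) : r ≤ 2 ^ r * r ^ 3 := by
  rcases Nat.eq_zero_or_pos r with rfl | hr
  · simp
  · have h1 : (1:ℕ) ≤ 2 ^ r := Nat.one_le_two_pow
    have h2 : r ≤ r ^ 3 := Nat.le_self_pow (by norm_num) r
    calc r ≤ r ^ 3 := h2
      _ ≤ 2 ^ r * r ^ 3 := Nat.le_mul_of_pos_left _ (by omega)

lemma one_le_prodQ {L : Finset ℕ} {f : ℕ → ℚ} (h : ∀ i ∈ L, 1 ≤ f i) :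
    1 ≤ ∏ i ∈ L, f i := by
  calc (1:ℚ) = ∏ _i ∈ L, 1 := by simp
    _ ≤ ∏ i ∈ L, f i := Finset.prod_le_prod (fun i _ => zero_le_one) h

lemma one_le_factor {ℓ r n : ℕ} (hlr : ℓ < r) (hrn : r ≤ n) :
    (1:ℚ) ≤ ((n : ℚ) - ℓ) / ((r : ℚ) - ℓ) := by
  have h1 : (0:ℚ) < (r : ℚ) - ℓ := by
    have : (ℓ:ℚ) < r := by exact_mod_cast hlr
    linarith
  rw [le_div_iff₀ h1]
  have : (r:ℚ) ≤ n := by exact_mod_cast hrn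
  linarith

lemma one_le_prod_factors {L : Finset ℕ} {r n : ℕ} (hL : L ⊆ Finset.range r) (hrn : r ≤ n) :
    (1:ℚ) ≤ ∏ ℓ ∈ L, ((n : ℚ) - ℓ) / ((r : ℚ) - ℓ) := by
  exact one_le_prodQ (fun ℓ hℓ => one_le_factor (Finset.mem_range.mp (hL hℓ)) hrn)

lemma div_nr_le_factor {ℓ r n : ℕ} (hlr : ℓ < r) (hrn : r ≤ n) :
    (n : ℚ) / r ≤ ((n : ℚ) - ℓ) / ((r : ℚ) - ℓ) := by
  have h0 : (0:ℚ) < (r:ℚ) := by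
    have : 0 < r := by omega
    exact_mod_cast this
  have h1 : (0:ℚ) < (r : ℚ) - ℓ := by
    have : (ℓ:ℚ) < r := by exact_mod_cast hlr
    linarith
  rw [div_le_div_iff₀ h0 h1]
  have hn : (r:ℚ) ≤ n := by exact_mod_cast hrn
  have hl0 : (0:ℚ) ≤ ℓ := by positivity
  nlinarith

lemma prod_shift (L : Finset ℕ) (k n r : ℕ) (hk : ∀ ℓ ∈ L, k ≤ ℓ)
    (hkn : k ≤ n) (hkr : k ≤ r) :
    ∏ ℓ' ∈ L.image (· - k), (((n - k : ℕ) : ℚ) - ℓ') / (((r - k : ℕ) : ℚ) - ℓ')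
      = ∏ ℓ ∈ L, ((n : ℚ) - ℓ) / ((r : ℚ) - ℓ) := by
  rw [Finset.prod_image]
  · apply Finset.prod_congr rfl
    intro ℓ hℓ
    have hkl := hk ℓ hℓ
    have e1 : ((n - k : ℕ) : ℚ) = (n:ℚ) - k := by
      exact_mod_cast (Nat.cast_sub hkn : ((n - k : ℕ) : ℚ) = (n:ℚ) - (k:ℚ))
    have e2 : ((r - k : ℕ) : ℚ) = (r:ℚ) - k := by
      exact_mod_cast (Nat.cast_sub hkr : ((r - k : ℕ) : ℚ) = (r:ℚ) - (k:ℚ))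
    have e3 : ((ℓ - k : ℕ) : ℚ) = (ℓ:ℚ) - k := by
      exact_mod_cast (Nat.cast_sub hkl : ((ℓ - k : ℕ) : ℚ) = (ℓ:ℚ) - (k:ℚ))
    rw [e1, e2, e3]
    ring_nf
  · intro a ha b hb hab
    have := hk a ha; have := hk b hb; simp only at hab; omega

lemma aux : ∀ r : ℕ, ∀ (n : ℕ) (L : Finset ℕ) (V : Finset ℕ) (H : Finset (Finset ℕ)),
    2 ^ r * r ^ 3 ≤ n → L ⊆ Finset.range r → (∀ A ∈ H, A.card = r) →
    (∀ A ∈ H, A ⊆ V) → V.card ≤ n →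
    (∀ A ∈ H, ∀ B ∈ H, A ≠ B → (A ∩ B).card ∈ L) →
    (H.card : ℚ) ≤ ∏ ℓ ∈ L, ((n : ℚ) - ℓ) / ((r : ℚ) - ℓ) := by
  intro r
  induction r using Nat.strong_induction_on with
  | _ r IH =>
  intro n L V H hn hL hunif hHV hV hint
  -- the star bound: edges containing a fixed nonempty set T
  have star_bound : ∀ T : Finset ℕ, T ⊆ V → 1 ≤ T.card → T.card ≤ r →
      ((H.filter (fun A => T ⊆ A)).card : ℚ)
        ≤ ∏ ℓ ∈ L.filter (fun ℓ => T.card ≤ ℓ), ((n : ℚ) - ℓ) / ((r : ℚ) - ℓ) := by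
    intro T hTV hk1 hkr
    set k := T.card with hk
    have hinj : Set.InjOn (fun A => A \ T) ((H.filter (fun A => T ⊆ A)) : Set (Finset ℕ)) := by
      intro A hA B hB hAB
      simp only [coe_filter, Set.mem_setOf_eq] at hA hB
      have h1 := Finset.sdiff_union_of_subset hA.2
      have h2 := Finset.sdiff_union_of_subset hB.2
      simp only at hAB
      rw [← h1, ← h2, hAB]
    have hres := IH (r - k) (by omega) (n - k)
      ((L.filter (fun ℓ => k ≤ ℓ)).image (· - k)) (V \ T)
      ((H.filter (fun A => T ⊆ A)).image (fun A => A \ T))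
      ?_ ?_ ?_ ?_ ?_ ?_
    · rw [Finset.card_image_of_injOn hinj] at hres
      rw [prod_shift _ k n r (by intro ℓ hℓ; exact (Finset.mem_filter.mp hℓ).2)
        (le_trans hkr (le_trans (r_le_f r) hn)) hkr] at hres
      exact hres
    · have := f_gap (Nat.sub_le r k)
      have h2 : r - (r - k) = k := by omega
      omega
    · intro a ha
      simp only [Finset.mem_image, Finset.mem_filter] at ha
      obtain ⟨ℓ, ⟨hℓL, hkℓ⟩, rfl⟩ := ha
      have := Finset.mem_range.mp (hL hℓL)
      simp only [Finset.mem_range]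
      omega
    · intro g hg
      simp only [Finset.mem_image, Finset.mem_filter] at hg
      obtain ⟨A, ⟨hA, hTA⟩, rfl⟩ := hg
      rw [Finset.card_sdiff_of_subset hTA, hunif A hA]
    · intro g hg
      simp only [Finset.mem_image, Finset.mem_filter] at hg
      obtain ⟨A, ⟨hA, hTA⟩, rfl⟩ := hg
      exact Finset.sdiff_subset_sdiff (hHV A hA) le_rfl
    · rw [Finset.card_sdiff_of_subset hTV]
      omega
    · intro g₁ hg₁ g₂ hg₂ hne
      simp only [Finset.mem_image, Finset.mem_filter] at hg₁ hg₂
      obtain ⟨A, ⟨hA, hTA⟩, rfl⟩ := hg₁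
      obtain ⟨B, ⟨hB, hTB⟩, rfl⟩ := hg₂
      have hABne : A ≠ B := by rintro rfl; exact hne rfl
      have hTsub : T ⊆ A ∩ B := Finset.subset_inter hTA hTB
      have hiter : (A ∩ B).card ∈ L := hint A hA B hB hABne
      have hdiff : A \ T ∩ (B \ T) = (A ∩ B) \ T := by
        ext x; simp only [Finset.mem_inter, Finset.mem_sdiff]; tauto
      rw [hdiff, Finset.card_sdiff_of_subset hTsub]
      simp only [Finset.mem_image, Finset.mem_filter]
      exact ⟨(A ∩ B).card, ⟨hiter, Finset.card_le_card hTsub⟩, rfl⟩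
  -- trivial case : L = ∅
  rcases Finset.eq_empty_or_nonempty L with rfl | hLne
  · have hcard : H.card ≤ 1 := by
      rw [Finset.card_le_one]
      intro a ha b hb
      by_contra hne
      simpa using hint a ha b hb hne
    simpa using (by exact_mod_cast hcard : (H.card : ℚ) ≤ 1)
  have hr1 : 1 ≤ r := by
    obtain ⟨ℓ, hℓ⟩ := hLne
    have := Finset.mem_range.mp (hL hℓ)
    omega
  have hrn : r ≤ n := le_trans (r_le_f r) hn
  have hr0Q : (0:ℚ) < r := by exact_mod_cast hr1
  by_cases h0 : 0 ∈ L
  · -- degree counting case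
    set D := ∏ ℓ ∈ L.filter (fun ℓ => 1 ≤ ℓ), ((n : ℚ) - ℓ) / ((r : ℚ) - ℓ) with hD
    have hD1 : (1:ℚ) ≤ D := by
      rw [hD]
      exact one_le_prodQ (fun ℓ hℓ =>
        one_le_factor (Finset.mem_range.mp (hL (Finset.mem_filter.mp hℓ).1)) hrn)
    have hdeg : ∀ x ∈ V, ((H.filter (fun A => x ∈ A)).card : ℚ) ≤ D := by
      intro x hx
      have h1 : H.filter (fun A => x ∈ A) = H.filter (fun A => {x} ⊆ A) := by
        apply Finset.filter_congr
        intro A _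
        simp [Finset.singleton_subset_iff]
      have h2 := star_bound {x} (by simpa using hx) (by simp) (by simpa using hr1)
      simp only [Finset.card_singleton] at h2
      rw [h1]
      exact h2
    have hsum : ∑ x ∈ V, (H.filter (fun A => x ∈ A)).card = H.card * r := by
      calc ∑ x ∈ V, (H.filter (fun A => x ∈ A)).card
          = ∑ x ∈ V, ∑ A ∈ H, if x ∈ A then 1 else 0 := by
            apply Finset.sum_congr rfl; intro x _; exact Finset.card_filter _ _
        _ = ∑ A ∈ H, ∑ x ∈ V, if x ∈ A then 1 else 0 := Finset.sum_comm
        _ = ∑ A ∈ H, (V.filter (fun x => x ∈ A)).card := by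
            apply Finset.sum_congr rfl; intro A _
            rw [Finset.card_filter]
        _ = ∑ A ∈ H, A.card := by
            apply Finset.sum_congr rfl; intro A hA
            congr 1
            ext x
            simp only [Finset.mem_filter]
            exact ⟨fun h => h.2, fun h => ⟨hHV A hA h, h⟩⟩
        _ = ∑ _A ∈ H, r := by
            apply Finset.sum_congr rfl; intro A hA; rw [hunif A hA]
        _ = H.card * r := by rw [Finset.sum_const, smul_eq_mul]
    have hmr : (H.card : ℚ) * r ≤ (n : ℚ) * D := by
      have hcast : ((H.card : ℚ)) * (r:ℚ) = ∑ x ∈ V, ((H.filter (fun A => x ∈ A)).card : ℚ) := by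
        rw [← Nat.cast_sum]
        rw [hsum]
        push_cast
        ring
      rw [hcast]
      calc ∑ x ∈ V, ((H.filter (fun A => x ∈ A)).card : ℚ)
          ≤ ∑ _x ∈ V, D := Finset.sum_le_sum hdeg
        _ = (V.card : ℚ) * D := by rw [Finset.sum_const, nsmul_eq_mul]
        _ ≤ (n : ℚ) * D := by
            apply mul_le_mul_of_nonneg_right _ (le_trans zero_le_one hD1)
            exact_mod_cast hV
    have herase : L.erase 0 = L.filter (fun ℓ => 1 ≤ ℓ) := by
      ext a
      simp only [Finset.mem_erase, Finset.mem_filter, Nat.one_le_iff_ne_zero]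
      tauto
    calc (H.card : ℚ) ≤ (n:ℚ) * D / r := by rw [le_div_iff₀ hr0Q]; exact hmr
      _ = (n:ℚ) / r * D := by ring
      _ = ∏ ℓ ∈ L, ((n : ℚ) - ℓ) / ((r : ℚ) - ℓ) := by
          rw [← Finset.mul_prod_erase L _ h0, herase, hD]
          norm_num
  · -- hard case: 1 ≤ min L
    set ℓ₁ := L.min' hLne with hℓ₁def
    have hℓ₁L : ℓ₁ ∈ L := L.min'_mem hLne
    have hℓ₁min : ∀ ℓ ∈ L, ℓ₁ ≤ ℓ := fun ℓ hℓ => L.min'_le ℓ hℓ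
    have hℓ₁pos : 1 ≤ ℓ₁ := by
      rcases Nat.eq_zero_or_pos ℓ₁ with h | h
      · exact absurd (h ▸ hℓ₁L) h0
      · omega
    have hℓ₁r : ℓ₁ < r := Finset.mem_range.mp (hL hℓ₁L)
    set P' := ∏ ℓ ∈ L.erase ℓ₁, ((n : ℚ) - ℓ) / ((r : ℚ) - ℓ) with hP'def
    have hP'1 : (1:ℚ) ≤ P' := by
      rw [hP'def]
      exact one_le_prodQ (fun ℓ hℓ =>
        one_le_factor (Finset.mem_range.mp (hL (Finset.mem_of_mem_erase hℓ))) hrn)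
    have hP'0 : (0:ℚ) ≤ P' := le_trans zero_le_one hP'1
    have hsplit : ∏ ℓ ∈ L, ((n : ℚ) - ℓ) / ((r : ℚ) - ℓ)
        = (((n:ℚ) - ℓ₁)/((r:ℚ) - ℓ₁)) * P' := (Finset.mul_prod_erase L _ hℓ₁L).symm
    rcases Finset.eq_empty_or_nonempty H with rfl | ⟨A₀, hA₀⟩
    · simp only [Finset.card_empty, Nat.cast_zero]
      calc (0:ℚ) ≤ 1 := zero_le_one
        _ ≤ _ := one_le_prod_factors hL hrn
    have hfe : L.filter (fun ℓ => ℓ₁ + 1 ≤ ℓ) = L.erase ℓ₁ := by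
      ext a
      simp only [Finset.mem_filter, Finset.mem_erase]
      constructor
      · rintro ⟨ha, h⟩; exact ⟨by omega, ha⟩
      · rintro ⟨hne, ha⟩; exact ⟨ha, by have := hℓ₁min a ha; omega⟩
    by_cases hgood : ∃ T ∈ A₀.powersetCard ℓ₁, ∀ B ∈ H, T ⊆ B
    · obtain ⟨T, hTmem, hTall⟩ := hgood
      obtain ⟨hTA₀, hTcard⟩ := Finset.mem_powersetCard.mp hTmem
      have hHfilter : H.filter (fun A => T ⊆ A) = H := Finset.filter_true_of_mem hTall
      have hsb := star_bound T (hTA₀.trans (hHV A₀ hA₀)) (by omega) (by omega)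
      rw [hHfilter, hTcard] at hsb
      have hfull : L.filter (fun ℓ => ℓ₁ ≤ ℓ) = L := Finset.filter_true_of_mem hℓ₁min
      rwa [hfull] at hsb
    · push_neg at hgood
      -- per-T bound
      have hTbound : ∀ T ∈ A₀.powersetCard ℓ₁,
          ((H.filter (fun A => T ⊆ A)).card : ℚ) ≤ ((r:ℚ) * r) * P' := by
        intro T hTmem
        obtain ⟨hTA₀, hTcard⟩ := Finset.mem_powersetCard.mp hTmem
        have hTV : T ⊆ V := hTA₀.trans (hHV A₀ hA₀)
        set G := (H.filter (fun A => T ⊆ A)).image (fun A => A \ T) with hGdef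
        have hinjG : Set.InjOn (fun A => A \ T)
            ((H.filter (fun A => T ⊆ A)) : Set (Finset ℕ)) := by
          intro A hA B hB hAB
          simp only [coe_filter, Set.mem_setOf_eq] at hA hB
          have h1 := Finset.sdiff_union_of_subset hA.2
          have h2 := Finset.sdiff_union_of_subset hB.2
          simp only at hAB
          rw [← h1, ← h2, hAB]
        have hGcard : G.card = (H.filter (fun A => T ⊆ A)).card :=
          Finset.card_image_of_injOn hinjG
        have hGmem : ∀ g ∈ G, g.card = r - ℓ₁ ∧ g ⊆ V ∧ ∀ y ∈ g, y ∉ T := by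
          intro g hg
          simp only [hGdef, Finset.mem_image, Finset.mem_filter] at hg
          obtain ⟨A, ⟨hA, hTA⟩, rfl⟩ := hg
          exact ⟨by rw [Finset.card_sdiff_of_subset hTA, hunif A hA, hTcard],
                 Finset.sdiff_subset.trans (hHV A hA),
                 fun y hy => (Finset.mem_sdiff.mp hy).2⟩
        -- choose maximum-cardinality pairwise-disjoint subfamily of G
        set 𝒟 := G.powerset.filter (fun M => ∀ a ∈ M, ∀ b ∈ M, a ≠ b → a ∩ b = ∅) with h𝒟def
        have h𝒟ne : 𝒟.Nonempty := ⟨∅, by simp [h𝒟def]⟩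
        obtain ⟨M, hM𝒟, hMmax⟩ := Finset.exists_max_image 𝒟 Finset.card h𝒟ne
        have hMG : M ⊆ G := Finset.mem_powerset.mp (Finset.mem_filter.mp hM𝒟).1
        have hMdisj : ∀ a ∈ M, ∀ b ∈ M, a ≠ b → a ∩ b = ∅ := (Finset.mem_filter.mp hM𝒟).2
        have hMr : M.card ≤ r := by
          by_contra hMr
          push_neg at hMr
          obtain ⟨B₀, hB₀H, hB₀T⟩ := hgood T hTmem
          apply hB₀T
          -- show T ⊆ B₀ : find g ∈ M with B₀ ∩ g = ∅
          have hdisjsum : ∑ g ∈ M, (B₀ ∩ g).card ≤ r := by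
            have h1 : ∀ a ∈ M, ∀ b ∈ M, a ≠ b → Disjoint (B₀ ∩ a) (B₀ ∩ b) := by
              intro a ha b hb hab
              have hab' := hMdisj a ha b hb hab
              rw [Finset.disjoint_left]
              intro x hx hx'
              have hx2 : x ∈ a ∩ b := Finset.mem_inter.mpr
                ⟨(Finset.mem_inter.mp hx).2, (Finset.mem_inter.mp hx').2⟩
              rw [hab'] at hx2
              exact absurd hx2 (Finset.notMem_empty x)
            calc ∑ g ∈ M, (B₀ ∩ g).card = (M.biUnion (fun g => B₀ ∩ g)).card :=
                  (Finset.card_biUnion h1).symm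
              _ ≤ B₀.card := Finset.card_le_card (by
                  intro x hx
                  obtain ⟨g, _, hx⟩ := Finset.mem_biUnion.mp hx
                  exact (Finset.mem_inter.mp hx).1)
              _ = r := hunif B₀ hB₀H
          have hex : ∃ g ∈ M, B₀ ∩ g = ∅ := by
            by_contra hno
            push_neg at hno
            have hge : ∀ g ∈ M, 1 ≤ (B₀ ∩ g).card := fun g hg =>
              Nat.one_le_iff_ne_zero.mpr (fun h => (hno g hg).ne_empty (Finset.card_eq_zero.mp h))
            have hc := Finset.card_nsmul_le_sum M (fun g => (B₀ ∩ g).card) 1 hge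
            simp only [smul_eq_mul, mul_one] at hc
            omega
          obtain ⟨g, hgM, hBg⟩ := hex
          have hgG := hMG hgM
          simp only [hGdef, Finset.mem_image, Finset.mem_filter] at hgG
          obtain ⟨A, ⟨hAH, hTA⟩, rfl⟩ := hgG
          have hBAsub : B₀ ∩ A ⊆ T := by
            intro x hx
            obtain ⟨hxB, hxA⟩ := Finset.mem_inter.mp hx
            by_contra hxT
            have : x ∈ B₀ ∩ (A \ T) :=
              Finset.mem_inter.mpr ⟨hxB, Finset.mem_sdiff.mpr ⟨hxA, hxT⟩⟩
            rw [hBg] at this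
            exact absurd this (Finset.notMem_empty x)
          rcases eq_or_ne B₀ A with rfl | hne
          · exact hTA
          · have hcard : (B₀ ∩ A).card ∈ L := hint B₀ hB₀H A hAH hne
            have : ℓ₁ ≤ (B₀ ∩ A).card := hℓ₁min _ hcard
            have heq : B₀ ∩ A = T :=
              Finset.eq_of_subset_of_card_le hBAsub (by omega)
            rw [← heq]
            exact Finset.inter_subset_left
        -- every member of G meets U
        set U := M.biUnion id with hUdef
        have hUcard : U.card ≤ r * r := by
          calc U.card ≤ ∑ g ∈ M, g.card := Finset.card_biUnion_le
            _ ≤ ∑ _g ∈ M, r := Finset.sum_le_sum (fun g hg => by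
                have := (hGmem g (hMG hg)).1; omega)
            _ = M.card * r := by rw [Finset.sum_const, smul_eq_mul]
            _ ≤ r * r := Nat.mul_le_mul_right r hMr
        have hmeet : ∀ g ∈ G, (g ∩ U).Nonempty := by
          intro g hg
          rw [Finset.nonempty_iff_ne_empty]
          intro hgU
          have hgne : g ≠ ∅ := by
            have := (hGmem g hg).1
            intro h
            rw [h] at this
            simp at this
            omega
          have hgM : g ∉ M := by
            intro hgM
            have hgsub : g ⊆ U := Finset.subset_biUnion_of_mem id hgM
            have : g ∩ U = g := Finset.inter_eq_left.mpr hgsub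
            rw [hgU] at this
            exact hgne this.symm
          have hins : insert g M ∈ 𝒟 := by
            rw [h𝒟def, Finset.mem_filter, Finset.mem_powerset]
            constructor
            · exact Finset.insert_subset hg hMG
            · intro a ha b hb hab
              rcases Finset.mem_insert.mp ha with rfl | haM
              · rcases Finset.mem_insert.mp hb with rfl | hbM
                · exact absurd rfl hab
                · have hbU : b ⊆ U := Finset.subset_biUnion_of_mem id hbM
                  have : a ∩ b ⊆ a ∩ U := Finset.inter_subset_inter le_rfl hbU
                  rw [hgU] at this
                  exact Finset.subset_empty.mp this
              · rcases Finset.mem_insert.mp hb with rfl | hbM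
                · have haU : a ⊆ U := Finset.subset_biUnion_of_mem id haM
                  have : b ∩ a ⊆ b ∩ U := Finset.inter_subset_inter le_rfl haU
                  rw [hgU] at this
                  rw [Finset.inter_comm]
                  exact Finset.subset_empty.mp this
                · exact hMdisj a haM b hbM hab
          have := hMmax _ hins
          rw [Finset.card_insert_of_notMem hgM] at this
          omega
        -- cover G by vertices of U
        have hGsub : G ⊆ U.biUnion (fun y => G.filter (fun g => y ∈ g)) := by
          intro g hg
          obtain ⟨y, hy⟩ := hmeet g hg
          obtain ⟨hyg, hyU⟩ := Finset.mem_inter.mp hy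
          exact Finset.mem_biUnion.mpr ⟨y, hyU, Finset.mem_filter.mpr ⟨hg, hyg⟩⟩
        have hyfacts : ∀ y ∈ U, y ∈ V ∧ y ∉ T := by
          intro y hy
          obtain ⟨g, hgM, hyg⟩ := Finset.mem_biUnion.mp hy
          have := hGmem g (hMG hgM)
          exact ⟨this.2.1 hyg, this.2.2 y hyg⟩
        have hylink : ∀ y ∈ U, ((G.filter (fun g => y ∈ g)).card : ℚ) ≤ P' := by
          intro y hy
          obtain ⟨hyV, hyT⟩ := hyfacts y hy
          have hGy : G.filter (fun g => y ∈ g)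
              = (H.filter (fun A => insert y T ⊆ A)).image (fun A => A \ T) := by
            ext g
            simp only [hGdef, Finset.mem_filter, Finset.mem_image]
            constructor
            · rintro ⟨⟨A, ⟨hA, hTA⟩, rfl⟩, hyg⟩
              refine ⟨A, ⟨hA, Finset.insert_subset ((Finset.mem_sdiff.mp hyg).1) hTA⟩, rfl⟩
            · rintro ⟨A, ⟨hA, hins⟩, rfl⟩
              have hyA : y ∈ A := hins (Finset.mem_insert_self y T)
              have hTA : T ⊆ A := (Finset.insert_subset_iff.mp hins).2
              exact ⟨⟨A, ⟨hA, hTA⟩, rfl⟩, Finset.mem_sdiff.mpr ⟨hyA, hyT⟩⟩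
          have hinj2 : Set.InjOn (fun A => A \ T)
              ((H.filter (fun A => insert y T ⊆ A)) : Set (Finset ℕ)) := by
            apply hinjG.mono
            intro A hA
            simp only [coe_filter, Set.mem_setOf_eq] at hA ⊢
            exact ⟨hA.1, (Finset.insert_subset_iff.mp hA.2).2⟩
          rw [hGy, Finset.card_image_of_injOn hinj2]
          have hsb := star_bound (insert y T)
            (Finset.insert_subset hyV hTV)
            (by rw [Finset.card_insert_of_notMem hyT]; omega)
            (by rw [Finset.card_insert_of_notMem hyT]; omega)
          rw [Finset.card_insert_of_notMem hyT, hTcard] at hsb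
          rwa [hfe] at hsb
        -- combine
        rw [← hGcard]
        calc (G.card : ℚ) ≤ ((U.biUnion (fun y => G.filter (fun g => y ∈ g))).card : ℚ) := by
              exact_mod_cast Finset.card_le_card hGsub
          _ ≤ ((∑ y ∈ U, (G.filter (fun g => y ∈ g)).card : ℕ) : ℚ) := by
              exact_mod_cast Finset.card_biUnion_le
          _ = ∑ y ∈ U, ((G.filter (fun g => y ∈ g)).card : ℚ) := by push_cast; ring
          _ ≤ ∑ _y ∈ U, P' := Finset.sum_le_sum hylink
          _ = (U.card : ℚ) * P' := by rw [Finset.sum_const, nsmul_eq_mul]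
          _ ≤ ((r:ℚ) * r) * P' := by
              apply mul_le_mul_of_nonneg_right _ hP'0
              have : (U.card : ℚ) ≤ ((r * r : ℕ) : ℚ) := by exact_mod_cast hUcard
              push_cast at this
              linarith
      -- cover H by the ℓ₁-subsets of A₀
      have hcover : H ⊆ (A₀.powersetCard ℓ₁).biUnion (fun T => H.filter (fun A => T ⊆ A)) := by
        intro B hB
        have hBA₀ : ℓ₁ ≤ (B ∩ A₀).card := by
          rcases eq_or_ne B A₀ with rfl | hne
          · rw [Finset.inter_self, hunif B hB]; omega
          · exact hℓ₁min _ (hint B hB A₀ hA₀ hne)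
        obtain ⟨T, hTsub, hTcard⟩ := Finset.exists_subset_card_eq hBA₀
        refine Finset.mem_biUnion.mpr ⟨T, ?_, ?_⟩
        · exact Finset.mem_powersetCard.mpr ⟨hTsub.trans Finset.inter_subset_right, hTcard⟩
        · exact Finset.mem_filter.mpr ⟨hB, hTsub.trans Finset.inter_subset_left⟩
      have hpcard : (A₀.powersetCard ℓ₁).card ≤ 2 ^ r := by
        calc (A₀.powersetCard ℓ₁).card ≤ A₀.powerset.card := Finset.card_le_card (by
              intro t ht
              exact Finset.mem_powerset.mpr (Finset.mem_powersetCard.mp ht).1)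
          _ = 2 ^ r := by rw [Finset.card_powerset, hunif A₀ hA₀]
      have hmain : (H.card : ℚ) ≤ ((2:ℚ) ^ r * ((r:ℚ) * r)) * P' := by
        calc (H.card : ℚ)
            ≤ (((A₀.powersetCard ℓ₁).biUnion (fun T => H.filter (fun A => T ⊆ A))).card : ℚ) := by
              exact_mod_cast Finset.card_le_card hcover
          _ ≤ ((∑ T ∈ A₀.powersetCard ℓ₁, (H.filter (fun A => T ⊆ A)).card : ℕ) : ℚ) := by
              exact_mod_cast Finset.card_biUnion_le
          _ = ∑ T ∈ A₀.powersetCard ℓ₁, ((H.filter (fun A => T ⊆ A)).card : ℚ) := by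
              push_cast; ring
          _ ≤ ∑ _T ∈ A₀.powersetCard ℓ₁, ((r:ℚ) * r) * P' := Finset.sum_le_sum hTbound
          _ = ((A₀.powersetCard ℓ₁).card : ℚ) * (((r:ℚ) * r) * P') := by
              rw [Finset.sum_const, nsmul_eq_mul]
          _ ≤ ((2:ℚ) ^ r * ((r:ℚ) * r)) * P' := by
              have h1 : ((A₀.powersetCard ℓ₁).card : ℚ) ≤ (2:ℚ) ^ r := by
                exact_mod_cast hpcard
              have h2 : (0:ℚ) ≤ ((r:ℚ) * r) * P' := by positivity
              nlinarith
      have hkey : ((2:ℚ) ^ r * ((r:ℚ) * r)) ≤ ((n:ℚ) - ℓ₁) / ((r:ℚ) - ℓ₁) := by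
        have h1 : ((2:ℚ) ^ r * ((r:ℚ) * r)) ≤ (n:ℚ) / r := by
          rw [le_div_iff₀ hr0Q]
          have h2 : ((2 ^ r * r ^ 3 : ℕ) : ℚ) ≤ (n:ℚ) := by exact_mod_cast hn
          push_cast at h2
          nlinarith
        exact h1.trans (div_nr_le_factor hℓ₁r hrn)
      rw [hsplit]
      calc (H.card : ℚ) ≤ ((2:ℚ) ^ r * ((r:ℚ) * r)) * P' := hmain
        _ ≤ (((n:ℚ) - ℓ₁) / ((r:ℚ) - ℓ₁)) * P' := mul_le_mul_of_nonneg_right hkey hP'0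

end DEFaux

/-- **Deza–Erdős–Frankl theorem** (upper bound): if `H` is an `L`-intersecting
`r`-uniform hypergraph on `n ≥ 2^r * r^3` vertices with `r ≥ 3` and
`L ⊆ {0, …, r-1}`, then `|H| ≤ ∏_{ℓ ∈ L} (n - ℓ)/(r - ℓ)`. -/
theorem deza_erdos_frankl (r n : ℕ) (hr : 3 ≤ r) (hn : 2 ^ r * r ^ 3 ≤ n)
    (L : Finset ℕ) (hL : L ⊆ Finset.range r)
    (H : Finset (Finset (Fin n)))
    (huniform : ∀ A ∈ H, A.card = r)
    (hinter : ∀ A ∈ H, ∀ B ∈ H, A ≠ B → (A ∩ B).card ∈ L) :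
    (H.card : ℚ) ≤ ∏ ℓ ∈ L, ((n : ℚ) - ℓ) / ((r : ℚ) - ℓ) := by
  classical
  have hmapinj : Function.Injective (fun A : Finset (Fin n) => A.map Fin.valEmbedding) :=
    fun A B h => Finset.map_injective Fin.valEmbedding h
  have key := DEFaux.aux r n L (Finset.range n)
    (H.image (fun A => A.map Fin.valEmbedding)) hn hL ?_ ?_ ?_ ?_
  · rwa [Finset.card_image_of_injective _ hmapinj] at key
  · intro A hA
    obtain ⟨A₀, hA₀, rfl⟩ := Finset.mem_image.mp hA
    rw [Finset.card_map]
    exact huniform A₀ hA₀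
  · intro A hA
    obtain ⟨A₀, _, rfl⟩ := Finset.mem_image.mp hA
    intro x hx
    obtain ⟨i, _, rfl⟩ := Finset.mem_map.mp hx
    simpa using i.isLt
  · rw [Finset.card_range]
  · intro A hA B hB hne
    obtain ⟨A₀, hA₀, rfl⟩ := Finset.mem_image.mp hA
    obtain ⟨B₀, hB₀, rfl⟩ := Finset.mem_image.mp hB
    have hne₀ : A₀ ≠ B₀ := fun h => hne (by rw [h])
    rw [← Finset.map_inter, Finset.card_map]
    exact hinter A₀ hA₀ B₀ hB₀ hne₀
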